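/- Let λ ∈ (0,1] and ρ₁ ≥ ρ₂ ≥ ... ≥ ρ_M > 0 be positive reals. Define sequences by S₀-sums a_s and S₁-sums b_s: a₁ = ρ₁, b₁ = 0, and for s ≥ 2, if b_{s-1} ≥ λ·a_{s-1} then a_s = a_{s-1} + ρ_s, b_s = b_{s-1}; otherwise a_s = a_{s-1}, b_s = b_{s-1} + ρ_s. Then for every s ∈ {1,...,M}, -m₁(s) ≤ λ·a_s - b_s ≤ λ·m₀(s), where m₀(s) is the minimum ρ_j among indices assigned to the first group up to step s and m₁(s) is the minimum among indices assigned to the second group (taken as +∞ if that group is empty). -/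
import Mathlib


open Finset

/-- Invariant of the greedy SED partitioning algorithm (Algorithm 2): at every step s,
the weighted difference λ·a_s - b_s is sandwiched between -min ρ over the second group
and λ·min ρ over the first group. -/
theorem greedy_sed_invariant
    (M : ℕ) (hM : 1 ≤ M) (lam : ℝ) (hlam : 0 < lam) (hlam' : lam ≤ 1)
    (ρ : ℕ → ℝ)
    (hpos : ∀ i, 1 ≤ i → i ≤ M → 0 < ρ i)
    (hmono : ∀ i j, 1 ≤ i → i ≤ j → j ≤ M → ρ j ≤ ρ i)
    (A B : ℕ → Finset ℕ)
    (hA1 : A 1 = {1}) (hB1 : B 1 = ∅)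
    (hstep : ∀ s, 2 ≤ s → s ≤ M →
      if (∑ i ∈ B (s - 1), ρ i) ≥ lam * ∑ i ∈ A (s - 1), ρ i
      then A s = insert s (A (s - 1)) ∧ B s = B (s - 1)
      else A s = A (s - 1) ∧ B s = insert s (B (s - 1))) :
    ∀ s, 1 ≤ s → s ≤ M →
      (∀ hne : (B s).Nonempty,
        -((B s).inf' hne ρ) ≤ lam * (∑ i ∈ A s, ρ i) - ∑ i ∈ B s, ρ i)
      ∧ (∀ hne : (A s).Nonempty,
        lam * (∑ i ∈ A s, ρ i) - (∑ i ∈ B s, ρ i) ≤ lam * (A s).inf' hne ρ) := by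
  suffices h : ∀ s, 1 ≤ s → s ≤ M →
      (∀ i ∈ A s, 1 ≤ i ∧ i ≤ s) ∧ (∀ i ∈ B s, 1 ≤ i ∧ i ≤ s) ∧
      (∀ hne : (B s).Nonempty, -((B s).inf' hne ρ) ≤ lam * (∑ i ∈ A s, ρ i) - ∑ i ∈ B s, ρ i) ∧
      (∀ hne : (A s).Nonempty, lam * (∑ i ∈ A s, ρ i) - (∑ i ∈ B s, ρ i) ≤ lam * (A s).inf' hne ρ) by
    intro s h1 h2
    exact ⟨(h s h1 h2).2.2.1, (h s h1 h2).2.2.2⟩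
  intro s hs
  induction s, hs using Nat.le_induction with
  | base =>
    intro _
    refine ⟨?_, ?_, ?_, ?_⟩
    · intro i hi; rw [hA1] at hi; simp at hi; omega
    · intro i hi; rw [hB1] at hi; simp at hi
    · intro hne; rw [hB1] at hne; simp at hne
    · intro hne
      simp [hA1, hB1]
  | succ n hn ih =>
    intro hM'
    have hnM : n ≤ M := by omega
    obtain ⟨hAb, hBb, hlow, hup⟩ := ih hnM
    have hs2 : 2 ≤ n + 1 := by omega
    have hstep' := hstep (n+1) hs2 hM'
    simp only [Nat.add_sub_cancel] at hstep'
    have hρs : 0 < ρ (n+1) := hpos (n+1) (by omega) hM'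
    have hρle : ∀ j, j ∈ A n ∪ B n → ρ (n+1) ≤ ρ j := by
      intro j hj
      have hb : 1 ≤ j ∧ j ≤ n := by
        rcases Finset.mem_union.mp hj with h | h
        exacts [hAb j h, hBb j h]
      exact hmono j (n+1) hb.1 (by omega) hM'
    have hsA : (n+1) ∉ A n := fun h => by have := (hAb _ h).2; omega
    have hsB : (n+1) ∉ B n := fun h => by have := (hBb _ h).2; omega
    by_cases hc : (∑ i ∈ B n, ρ i) ≥ lam * ∑ i ∈ A n, ρ i
    · rw [if_pos hc] at hstep'
      obtain ⟨hA', hB'⟩ := hstep'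
      refine ⟨?_, ?_, ?_, ?_⟩
      · intro i hi; rw [hA'] at hi
        rcases Finset.mem_insert.mp hi with h | h
        · omega
        · have := hAb i h; omega
      · intro i hi; rw [hB'] at hi; have := hBb i hi; omega
      · intro hne
        rw [hB'] at hne
        simp only [hA', hB', Finset.sum_insert hsA]
        have := hlow hne
        nlinarith
      · intro hne
        simp only [hA', hB', Finset.sum_insert hsA]
        have hinf : (insert (n+1) (A n)).inf' (Finset.insert_nonempty _ _) ρ = ρ (n+1) := by
          apply le_antisymm
          · exact Finset.inf'_le ρ (Finset.mem_insert_self _ _)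
          · apply Finset.le_inf'
            intro j hj
            rcases Finset.mem_insert.mp hj with h | h
            · exact h ▸ le_refl _
            · exact hρle j (Finset.mem_union_left _ h)
        rw [hinf]
        nlinarith
    · rw [if_neg hc] at hstep'
      obtain ⟨hA', hB'⟩ := hstep'
      push_neg at hc
      refine ⟨?_, ?_, ?_, ?_⟩
      · intro i hi; rw [hA'] at hi; have := hAb i hi; omega
      · intro i hi; rw [hB'] at hi
        rcases Finset.mem_insert.mp hi with h | h
        · omega
        · have := hBb i h; omega
      · intro hne
        simp only [hA', hB', Finset.sum_insert hsB]
        have hinf : (insert (n+1) (B n)).inf' (Finset.insert_nonempty _ _) ρ = ρ (n+1) := by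
          apply le_antisymm
          · exact Finset.inf'_le ρ (Finset.mem_insert_self _ _)
          · apply Finset.le_inf'
            intro j hj
            rcases Finset.mem_insert.mp hj with h | h
            · exact h ▸ le_refl _
            · exact hρle j (Finset.mem_union_right _ h)
        rw [hinf]
        nlinarith
      · intro hne
        rw [hA'] at hne
        simp only [hA', hB', Finset.sum_insert hsB]
        have := hup hne
        nlinarith
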